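/- Let Ω ⊆ ℝⁿ be open and nonempty, h : Ω → ℝ continuous, and ρ : ℝⁿ → [0, ∞) an integrable probability density whose support is Ω (ρ > 0 a.e. on Ω, ρ = 0 a.e. off Ω). Define ψ(k) := log ∫_Ω ρ(y) exp(⟨k, y⟩ − h(y)) dy ∈ (−∞, +∞] and φ_h(x) := sup_{k ∈ ℝⁿ} (⟨x, k⟩ − ψ(k)). Then exactly one of the following holds on the convex hull ⟨Ω⟩: either φ_h(x) = −∞ for every x ∈ ⟨Ω⟩, or φ_h is real-valued and continuous on ⟨Ω⟩. -/

import Mathlib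

open MeasureTheory
open scoped RealInnerProductSpace ENNReal

/-- The tilted log-moment-generating function
`ψ(k) = log ∫_Ω ρ(y) exp(⟨k,y⟩ − h(y)) dy ∈ [−∞, +∞]` (it takes values in `(−∞,∞]`
when `ρ` is a.e. positive on the nonempty open set `Ω`). -/
noncomputable def psiTilt {n : ℕ} (Ω : Set (EuclideanSpace ℝ (Fin n)))
    (ρ h : EuclideanSpace ℝ (Fin n) → ℝ) (k : EuclideanSpace ℝ (Fin n)) : EReal :=
  ENNReal.log (∫⁻ y in Ω, ENNReal.ofReal (ρ y * Real.exp (⟪k, y⟫ - h y)))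

/-- The Legendre transform `φ_h(x) = sup_k (⟨x,k⟩ − ψ(k))`, with values in `ℝ ∪ {−∞}`. -/
noncomputable def phiTilt {n : ℕ} (Ω : Set (EuclideanSpace ℝ (Fin n)))
    (ρ h : EuclideanSpace ℝ (Fin n) → ℝ) (x : EuclideanSpace ℝ (Fin n)) : EReal :=
  ⨆ k : EuclideanSpace ℝ (Fin n), ((⟪x, k⟫ : ℝ) : EReal) - psiTilt Ω ρ h k

/-- A nonnegative function that is a.e. positive has positive `lintegral` w.r.t. a nonzero
measure. -/
lemma lintegral_pos_of_ae_pos' {α : Type*} [MeasurableSpace α] {μ : Measure α} {f : α → ℝ≥0∞}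
    (hf : AEMeasurable f μ) (hpos : ∀ᵐ y ∂μ, 0 < f y) (hμ : μ ≠ 0) :
    0 < ∫⁻ y, f y ∂μ := by
  rw [pos_iff_ne_zero, Ne, lintegral_eq_zero_iff' hf]
  intro h0
  have hFalse : ∀ᵐ y ∂μ, False := by
    filter_upwards [hpos, h0] with y h1 h2
    exact absurd h2 h1.ne'
  have : μ Set.univ = 0 := by simpa using ae_iff.mp hFalse
  exact hμ (Measure.measure_univ_eq_zero.mp this)

/-- Elementary `EReal` arithmetic for subtraction of real coercions. -/
lemma EReal.coe_sub_le_coe_iff' {a b c : ℝ} :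
    (a : EReal) - (b : EReal) ≤ (c : EReal) ↔ a - b ≤ c := by
  rw [← EReal.coe_sub, EReal.coe_le_coe_iff]

/-- Elementary `EReal` arithmetic: if `a - c ≤ b` (as reals, coerced) then `a - b ≤ c`. -/
lemma EReal.coe_sub_le_coe_of {a c : ℝ} {b : EReal} (h : ((a - c : ℝ) : EReal) ≤ b) :
    (a : EReal) - b ≤ (c : EReal) := by
  induction b using EReal.rec with
  | bot => exact absurd (le_bot_iff.mp h) (EReal.coe_ne_bot _)
  | coe r =>
      have h' : a - c ≤ r := EReal.coe_le_coe_iff.mp h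
      rw [EReal.coe_sub_le_coe_iff']
      linarith
  | top => rw [EReal.sub_top]; exact bot_le

/-- The convex hull of an open set is open. -/
lemma isOpen_convexHull_of_isOpen {E : Type*} [NormedAddCommGroup E] [NormedSpace ℝ E]
    {s : Set E} (hs : IsOpen s) : IsOpen (convexHull ℝ s) := by
  rw [← subset_interior_iff_isOpen]
  refine convexHull_min (fun x hx => ?_) (convex_convexHull ℝ s).interior
  exact interior_mono (subset_convexHull ℝ s) (hs.subset_interior_iff.mpr subset_rfl hx)

/-- Proposition 2, part 1. On the convex hull of `Ω`, the Legendre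
transform `φ_h` is either identically `−∞` or real-valued and continuous. -/
theorem phiTilt_bot_or_continuous (n : ℕ)
    (Ω : Set (EuclideanSpace ℝ (Fin n))) (hΩo : IsOpen Ω) (hΩne : Ω.Nonempty)
    (h : EuclideanSpace ℝ (Fin n) → ℝ) (hh : ContinuousOn h Ω)
    (ρ : EuclideanSpace ℝ (Fin n) → ℝ) (hρ0 : ∀ y, 0 ≤ ρ y)
    (hρint : Integrable ρ) (hρ1 : (∫ y, ρ y) = 1)
    (hρsupp : ∀ᵐ y, (y ∈ Ω → 0 < ρ y) ∧ (y ∉ Ω → ρ y = 0)) :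
    Xor'
      (∀ x ∈ convexHull ℝ Ω, phiTilt Ω ρ h x = ⊥)
      (∃ g : EuclideanSpace ℝ (Fin n) → ℝ,
        ContinuousOn g (convexHull ℝ Ω) ∧
        ∀ x ∈ convexHull ℝ Ω, phiTilt Ω ρ h x = ((g x : ℝ) : EReal)) := by
  classical
  obtain ⟨ρ', hρ'meas, hρρ'⟩ : ∃ ρ' : EuclideanSpace ℝ (Fin n) → ℝ,
      Measurable ρ' ∧ ρ =ᵐ[volume] ρ' :=
    ⟨hρint.aemeasurable.mk _, hρint.aemeasurable.measurable_mk, hρint.aemeasurable.ae_eq_mk⟩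
  -- The integrand can be replaced by its measurable version.
  have hFcongr : ∀ k, (∫⁻ y in Ω, ENNReal.ofReal (ρ y * Real.exp (⟪k, y⟫ - h y))) =
      ∫⁻ y in Ω, ENNReal.ofReal (ρ' y * Real.exp (⟪k, y⟫ - h y)) := by
    intro k
    refine lintegral_congr_ae (ae_restrict_of_ae ?_)
    filter_upwards [hρρ'] with y hy
    rw [hy]
  -- `ψ` never takes the value `⊥`.
  have hψbot : ∀ k, psiTilt Ω ρ h k ≠ ⊥ := by
    intro k
    rw [psiTilt, Ne, ENNReal.log_eq_bot_iff, hFcongr k]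
    have hmeas : AEMeasurable (fun y => ENNReal.ofReal (ρ' y * Real.exp (⟪k, y⟫ - h y)))
        (volume.restrict Ω) := by
      refine AEMeasurable.ennreal_ofReal (AEMeasurable.mul hρ'meas.aemeasurable.restrict ?_)
      have h1 : AEMeasurable (fun y : EuclideanSpace ℝ (Fin n) => ⟪k, y⟫ - h y)
          (volume.restrict Ω) := by
        refine AEMeasurable.sub ?_ (hh.aemeasurable hΩo.measurableSet)
        exact (Continuous.inner continuous_const continuous_id).aemeasurable
      exact (Real.measurable_exp.comp_aemeasurable h1)
    have hpos : ∀ᵐ y ∂volume.restrict Ω,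
        0 < ENNReal.ofReal (ρ' y * Real.exp (⟪k, y⟫ - h y)) := by
      filter_upwards [ae_restrict_mem hΩo.measurableSet,
        ae_restrict_of_ae hρsupp, ae_restrict_of_ae hρρ'] with y hyΩ hy1 hy2
      rw [ENNReal.ofReal_pos, ← hy2]
      exact mul_pos (hy1.1 hyΩ) (Real.exp_pos _)
    have hμ : volume.restrict Ω ≠ 0 := by
      rw [Ne, Measure.restrict_eq_zero]
      exact (hΩo.measure_pos volume hΩne).ne'
    exact (lintegral_pos_of_ae_pos' hmeas hpos hμ).ne'
  -- Key upper bound: at each point of `Ω`, `ψ k ≥ ⟨x,k⟩ − C`.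
  have key : ∀ x ∈ Ω, ∃ C : ℝ, ∀ k, ((⟪x, k⟫ - C : ℝ) : EReal) ≤ psiTilt Ω ρ h k := by
    intro x hx
    obtain ⟨R₀, hR₀, hball⟩ := Metric.isOpen_iff.mp hΩo x hx
    set R : ℝ := R₀ / 2 with hRdef
    have hR : 0 < R := by positivity
    have hRsub : Metric.closedBall x R ⊆ Ω :=
      (Metric.closedBall_subset_ball (by simp [hRdef]; linarith)).trans hball
    -- bound `h` on the closed ball
    obtain ⟨z, hzmem, hz⟩ := (isCompact_closedBall x R).exists_isMaxOn
      ⟨x, Metric.mem_closedBall_self hR.le⟩ (hh.mono hRsub)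
    set M : ℝ := h z with hMdef
    have hM : ∀ y ∈ Metric.closedBall x R, h y ≤ M := fun y hy => hz hy
    set ε : ℝ := R / 4 with hεdef
    have hε : 0 < ε := by positivity
    set r : ℝ := ε / Real.sqrt (n + 1) with hrdef
    have hsqrt : (1 : ℝ) ≤ Real.sqrt (n + 1) :=
      Real.one_le_sqrt.mpr (by push_cast; linarith)
    have hsqrtpos : 0 < Real.sqrt (n + 1) := lt_of_lt_of_le one_pos hsqrt
    have hr : 0 < r := by positivity
    have hrε : r ≤ ε := by
      rw [hrdef]
      exact div_le_self hε.le hsqrt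
    -- the finitely many candidate centers
    set pts : Option (Fin n × Bool) → EuclideanSpace ℝ (Fin n) := fun j =>
      Option.elim j x (fun p =>
        x + EuclideanSpace.single p.1 (if p.2 then 2 * ε else -(2 * ε))) with hptsdef
    have hpts_dist : ∀ j, ‖pts j - x‖ ≤ 2 * ε := by
      rintro (_ | ⟨i, s⟩)
      · simp [hptsdef]; positivity
      · simp only [hptsdef, Option.elim, add_sub_cancel_left]
        rw [EuclideanSpace.norm_single]
        rcases s with _ | _ <;> simp [abs_of_nonneg, hε.le] <;> positivity
    have hpts_sub : ∀ j, Metric.ball (pts j) r ⊆ Metric.closedBall x R := by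
      intro j y hy
      rw [Metric.mem_closedBall]
      have h1 : dist y (pts j) < r := Metric.mem_ball.mp hy
      have h2 : dist (pts j) x ≤ 2 * ε := by
        rw [dist_eq_norm]; exact hpts_dist j
      calc dist y x ≤ dist y (pts j) + dist (pts j) x := dist_triangle _ _ _
        _ ≤ r + 2 * ε := by linarith
        _ ≤ R := by rw [hεdef] at *; linarith
    -- positive mass near each candidate point
    set J : Option (Fin n × Bool) → ℝ≥0∞ := fun j =>
      ∫⁻ y in Metric.ball (pts j) r, ENNReal.ofReal (ρ' y) with hJdef
    have hJpos : ∀ j, 0 < J j := by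
      intro j
      refine lintegral_pos_of_ae_pos' hρ'meas.ennreal_ofReal.aemeasurable ?_ ?_
      · filter_upwards [ae_restrict_mem Metric.isOpen_ball.measurableSet,
          ae_restrict_of_ae hρsupp, ae_restrict_of_ae hρρ'] with y hymem hy1 hy2
        rw [ENNReal.ofReal_pos, ← hy2]
        exact hy1.1 (hRsub (hpts_sub j hymem))
      · rw [Ne, Measure.restrict_eq_zero]
        exact (Metric.isOpen_ball.measure_pos volume (Metric.nonempty_ball.mpr hr)).ne'
    -- a uniform positive lower bound on these masses
    have hunivne : (Finset.univ : Finset (Option (Fin n × Bool))).Nonempty := ⟨none, Finset.mem_univ _⟩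
    set m : ℝ≥0∞ := Finset.univ.inf' hunivne (fun j => min (J j) 1) with hmdef
    have hmpos : 0 < m := by
      rw [hmdef, Finset.lt_inf'_iff]
      exact fun j _ => lt_min (hJpos j) one_pos
    have hm1 : m ≤ 1 :=
      (Finset.inf'_le _ (Finset.mem_univ none)).trans (min_le_right _ _)
    have hmtop : m ≠ ⊤ := (hm1.trans_lt (by simp)).ne
    have hmle : ∀ j, m ≤ J j := fun j =>
      (Finset.inf'_le _ (Finset.mem_univ j)).trans (min_le_left _ _)
    set c₀ : ℝ := m.toReal with hc₀def
    have hc₀pos : 0 < c₀ := ENNReal.toReal_pos hmpos.ne' hmtop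
    have hc₀m : ENNReal.ofReal c₀ = m := ENNReal.ofReal_toReal hmtop
    refine ⟨M - Real.log c₀, fun k => ?_⟩
    -- pick a good candidate point whose ball lies on the favourable side
    have hdir : ∃ j, ∀ y ∈ Metric.ball (pts j) r, ⟪k, x⟫ ≤ ⟪k, y⟫ := by
      rcases eq_or_ne k 0 with hk | hk
      · exact ⟨none, fun y _ => by simp [hk]⟩
      · have hne : (Finset.univ : Finset (Fin n)).Nonempty := by
          obtain ⟨i, -⟩ : ∃ i, k i ≠ 0 := by
            by_contra! hc; exact hk (by ext i; simp [hc i])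
          exact ⟨i, Finset.mem_univ _⟩
        obtain ⟨i, -, hi⟩ := Finset.exists_max_image Finset.univ (fun j => |k j|) hne
        have hki : 0 < |k i| := by
          obtain ⟨i₀, hi₀⟩ : ∃ i, k i ≠ 0 := by
            by_contra! hc; exact hk (by ext i; simp [hc i])
          exact lt_of_lt_of_le (abs_pos.mpr hi₀) (hi i₀ (Finset.mem_univ _))
        have hnorm : ‖k‖ ≤ Real.sqrt (n + 1) * |k i| := by
          rw [EuclideanSpace.norm_eq]
          have hsum : (∑ j, ‖k j‖ ^ 2) ≤ (n + 1) * |k i| ^ 2 := by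
            calc (∑ j, ‖k j‖ ^ 2) ≤ ∑ j : Fin n, |k i| ^ 2 := by
                  refine Finset.sum_le_sum fun j _ => ?_
                  rw [Real.norm_eq_abs]
                  exact pow_le_pow_left₀ (abs_nonneg _) (hi j (Finset.mem_univ _)) 2
              _ = n * |k i| ^ 2 := by simp [Finset.sum_const]
              _ ≤ (n + 1) * |k i| ^ 2 := by nlinarith [sq_nonneg (|k i|)]
          calc Real.sqrt (∑ j, ‖k j‖ ^ 2) ≤ Real.sqrt ((n + 1) * |k i| ^ 2) :=
                Real.sqrt_le_sqrt hsum
            _ = Real.sqrt (n + 1) * |k i| := by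
                rw [Real.sqrt_mul (by positivity), Real.sqrt_sq (abs_nonneg _)]
        set s : Bool := decide (0 ≤ k i) with hsdef
        refine ⟨some (i, s), fun y hy => ?_⟩
        have hip : ⟪k, pts (some (i, s))⟫ = ⟪k, x⟫ + 2 * ε * |k i| := by
          simp only [hptsdef, Option.elim]
          rw [inner_add_right]
          congr 1
          rw [EuclideanSpace.inner_single_right]
          simp only [RCLike.star_def, conj_trivial]
          rcases le_or_gt 0 (k i) with hki' | hki'
          · rw [hsdef, decide_eq_true hki', if_pos rfl, abs_of_nonneg hki'] <;> try ring
          · have : s = false := by rw [hsdef]; simp [not_le.mpr hki']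
            rw [this, if_neg (by simp), abs_of_neg hki'] <;> try ring
        have hCS : ⟪k, pts (some (i, s))⟫ - ⟪k, y⟫ ≤ ‖k‖ * r := by
          have h1 : ⟪k, pts (some (i, s))⟫ - ⟪k, y⟫ = ⟪k, pts (some (i, s)) - y⟫ := by
            rw [inner_sub_right]
          rw [h1]
          calc ⟪k, pts (some (i, s)) - y⟫ ≤ ‖k‖ * ‖pts (some (i, s)) - y‖ :=
                real_inner_le_norm _ _
            _ ≤ ‖k‖ * r := by
                refine mul_le_mul_of_nonneg_left ?_ (norm_nonneg _)
                rw [← dist_eq_norm, dist_comm]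
                exact (Metric.mem_ball.mp hy).le
        have hkr : ‖k‖ * r ≤ ε * |k i| := by
          rw [hrdef]
          rw [mul_div_assoc']
          rw [div_le_iff₀ hsqrtpos]
          calc ‖k‖ * ε ≤ (Real.sqrt (n + 1) * |k i|) * ε :=
                mul_le_mul_of_nonneg_right hnorm hε.le
            _ = ε * |k i| * Real.sqrt (n + 1) := by ring
        nlinarith [hki]
    obtain ⟨j, hj⟩ := hdir
    -- the integral lower bound
    set c : ℝ≥0∞ := ENNReal.ofReal (Real.exp (⟪k, x⟫ - M)) with hcdef
    have hFbound : ENNReal.ofReal (c₀ * Real.exp (⟪k, x⟫ - M)) ≤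
        ∫⁻ y in Ω, ENNReal.ofReal (ρ' y * Real.exp (⟪k, y⟫ - h y)) := by
      have step1 : ENNReal.ofReal (c₀ * Real.exp (⟪k, x⟫ - M)) = m * c := by
        rw [ENNReal.ofReal_mul hc₀pos.le, hc₀m]
      have step2 : m * c ≤ J j * c :=
        mul_le_mul_left (hmle j) c
      have step3 : J j * c = ∫⁻ y in Metric.ball (pts j) r,
          ENNReal.ofReal (ρ' y) * c := by
        rw [hJdef]
        exact (lintegral_mul_const c hρ'meas.ennreal_ofReal).symm
      have step4 : (∫⁻ y in Metric.ball (pts j) r, ENNReal.ofReal (ρ' y) * c) ≤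
          ∫⁻ y in Metric.ball (pts j) r, ENNReal.ofReal (ρ' y * Real.exp (⟪k, y⟫ - h y)) := by
        refine lintegral_mono_ae ?_
        filter_upwards [ae_restrict_mem Metric.isOpen_ball.measurableSet,
          ae_restrict_of_ae hρρ'] with y hymem hyρ
        have hρ'nonneg : 0 ≤ ρ' y := by rw [← hyρ]; exact hρ0 y
        rw [hcdef, ← ENNReal.ofReal_mul hρ'nonneg]
        refine ENNReal.ofReal_le_ofReal ?_
        refine mul_le_mul_of_nonneg_left ?_ hρ'nonneg
        refine Real.exp_le_exp.mpr ?_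
        have h1 : ⟪k, x⟫ ≤ ⟪k, y⟫ := hj y hymem
        have h2 : h y ≤ M := hM y (hpts_sub j hymem)
        linarith
      have step5 : (∫⁻ y in Metric.ball (pts j) r,
          ENNReal.ofReal (ρ' y * Real.exp (⟪k, y⟫ - h y))) ≤
          ∫⁻ y in Ω, ENNReal.ofReal (ρ' y * Real.exp (⟪k, y⟫ - h y)) :=
        lintegral_mono_set ((hpts_sub j).trans hRsub)
      calc ENNReal.ofReal (c₀ * Real.exp (⟪k, x⟫ - M)) = m * c := step1
        _ ≤ J j * c := step2
        _ = _ := step3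
        _ ≤ _ := step4
        _ ≤ _ := step5
    have hlog := ENNReal.log_le_log_iff.mpr hFbound
    rw [ENNReal.log_ofReal_of_pos (by positivity)] at hlog
    rw [psiTilt, hFcongr k]
    refine le_trans ?_ hlog
    rw [EReal.coe_le_coe_iff]
    rw [Real.log_mul hc₀pos.ne' (Real.exp_ne_zero _), Real.log_exp, real_inner_comm]
    linarith
  -- the upper bound propagates to the convex hull
  have Qconv : Convex ℝ {x : EuclideanSpace ℝ (Fin n) |
      ∃ C : ℝ, ∀ k, ((⟪x, k⟫ - C : ℝ) : EReal) ≤ psiTilt Ω ρ h k} := by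
    rintro x ⟨Cx, hCx⟩ y ⟨Cy, hCy⟩ a b ha hb hab
    refine ⟨max Cx Cy, fun k => ?_⟩
    have hin : ⟪a • x + b • y, k⟫ = a * ⟪x, k⟫ + b * ⟪y, k⟫ := by
      rw [inner_add_left, real_inner_smul_left, real_inner_smul_left]
    have hmax : ⟪a • x + b • y, k⟫ - max Cx Cy ≤
        max (⟪x, k⟫ - Cx) (⟪y, k⟫ - Cy) := by
      have h3 : a * Cx + b * Cy ≤ max Cx Cy := by
        have e1 := mul_le_mul_of_nonneg_left (le_max_left Cx Cy) ha
        have e2 := mul_le_mul_of_nonneg_left (le_max_right Cx Cy) hb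
        have e3 : a * max Cx Cy + b * max Cx Cy = max Cx Cy := by
          rw [← add_mul, hab, one_mul]
        linarith
      have h4 : a * (⟪x, k⟫ - Cx) + b * (⟪y, k⟫ - Cy) ≤
          max (⟪x, k⟫ - Cx) (⟪y, k⟫ - Cy) := by
        have e1 := mul_le_mul_of_nonneg_left
          (le_max_left (⟪x, k⟫ - Cx) (⟪y, k⟫ - Cy)) ha
        have e2 := mul_le_mul_of_nonneg_left
          (le_max_right (⟪x, k⟫ - Cx) (⟪y, k⟫ - Cy)) hb
        have e3 : a * max (⟪x, k⟫ - Cx) (⟪y, k⟫ - Cy) +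
            b * max (⟪x, k⟫ - Cx) (⟪y, k⟫ - Cy) = max (⟪x, k⟫ - Cx) (⟪y, k⟫ - Cy) := by
          rw [← add_mul, hab, one_mul]
        linarith
      rw [hin]; nlinarith
    calc ((⟪a • x + b • y, k⟫ - max Cx Cy : ℝ) : EReal) ≤
          ((max (⟪x, k⟫ - Cx) (⟪y, k⟫ - Cy) : ℝ) : EReal) :=
        EReal.coe_le_coe_iff.mpr hmax
      _ ≤ psiTilt Ω ρ h k := by
          rcases max_cases (⟪x, k⟫ - Cx) (⟪y, k⟫ - Cy) with ⟨heq, -⟩ | ⟨heq, -⟩ <;> rw [heq]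
          · exact hCx k
          · exact hCy k
  have Qhull : ∀ x ∈ convexHull ℝ Ω, ∃ C : ℝ, ∀ k,
      ((⟪x, k⟫ - C : ℝ) : EReal) ≤ psiTilt Ω ρ h k :=
    fun x hx => convexHull_min (fun z hz => key z hz) Qconv hx
  -- upper bound for φ on the hull
  have hup : ∀ x ∈ convexHull ℝ Ω, ∃ C : ℝ, phiTilt Ω ρ h x ≤ (C : EReal) := by
    intro x hx
    obtain ⟨C, hC⟩ := Qhull x hx
    exact ⟨C, iSup_le fun k => EReal.coe_sub_le_coe_of (hC k)⟩
  -- main dichotomy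
  by_cases hcase : ∀ k, psiTilt Ω ρ h k = ⊤
  · -- everything is `⊥`
    left
    constructor
    · intro x _
      rw [phiTilt]
      simp [hcase, EReal.sub_top]
    · rintro ⟨g, -, hg⟩
      obtain ⟨x₀, hx₀⟩ := hΩne
      have h1 := hg x₀ (subset_convexHull ℝ Ω hx₀)
      rw [phiTilt] at h1
      simp only [hcase, EReal.sub_top, iSup_bot] at h1
      exact EReal.coe_ne_bot (g x₀) h1.symm
  · right
    push_neg at hcase
    obtain ⟨k₀, hk₀⟩ := hcase
    have hψk₀ : psiTilt Ω ρ h k₀ = ((psiTilt Ω ρ h k₀).toReal : EReal) :=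
      (EReal.coe_toReal hk₀ (hψbot k₀)).symm
    set s₀ : ℝ := (psiTilt Ω ρ h k₀).toReal with hs₀def
    have hlow : ∀ x : EuclideanSpace ℝ (Fin n),
        ((⟪x, k₀⟫ - s₀ : ℝ) : EReal) ≤ phiTilt Ω ρ h x := by
      intro x
      calc ((⟪x, k₀⟫ - s₀ : ℝ) : EReal)
          = ((⟪x, k₀⟫ : ℝ) : EReal) - (s₀ : EReal) := EReal.coe_sub _ _
        _ = ((⟪x, k₀⟫ : ℝ) : EReal) - psiTilt Ω ρ h k₀ := by rw [← hψk₀]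
        _ ≤ phiTilt Ω ρ h x :=
            le_iSup (fun k => ((⟪x, k⟫ : ℝ) : EReal) - psiTilt Ω ρ h k) k₀
    have hne_bot : ∀ x, phiTilt Ω ρ h x ≠ ⊥ := by
      intro x hbot
      have := hlow x
      rw [hbot, le_bot_iff] at this
      exact EReal.coe_ne_bot _ this
    have hne_top : ∀ x ∈ convexHull ℝ Ω, phiTilt Ω ρ h x ≠ ⊤ := by
      intro x hx
      obtain ⟨C, hC⟩ := hup x hx
      exact (hC.trans_lt (EReal.coe_lt_top C)).ne
    set g : EuclideanSpace ℝ (Fin n) → ℝ := fun x => (phiTilt Ω ρ h x).toReal with hgdef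
    have hgeq : ∀ x ∈ convexHull ℝ Ω, phiTilt Ω ρ h x = ((g x : ℝ) : EReal) :=
      fun x hx => (EReal.coe_toReal (hne_top x hx) (hne_bot x)).symm
    have hterm : ∀ x ∈ convexHull ℝ Ω, ∀ k,
        ((⟪x, k⟫ : ℝ) : EReal) - psiTilt Ω ρ h k ≤ ((g x : ℝ) : EReal) := by
      intro x hx k
      rw [← hgeq x hx]
      exact le_iSup (fun k => ((⟪x, k⟫ : ℝ) : EReal) - psiTilt Ω ρ h k) k
    have hconvg : ConvexOn ℝ (convexHull ℝ Ω) g := by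
      refine ⟨convex_convexHull ℝ Ω, fun x hx y hy a b ha hb hab => ?_⟩
      have hmem : a • x + b • y ∈ convexHull ℝ Ω :=
        (convex_convexHull ℝ Ω) hx hy ha hb hab
      have hφ : phiTilt Ω ρ h (a • x + b • y) ≤ ((a * g x + b * g y : ℝ) : EReal) := by
        rw [phiTilt]
        refine iSup_le fun k => ?_
        by_cases hk : psiTilt Ω ρ h k = ⊤
        · rw [hk, EReal.sub_top]; exact bot_le
        · have hkreal : psiTilt Ω ρ h k = (((psiTilt Ω ρ h k).toReal : ℝ) : EReal) :=
            (EReal.coe_toReal hk (hψbot k)).symm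
          set t : ℝ := (psiTilt Ω ρ h k).toReal with htdef
          have hx' : ⟪x, k⟫ - t ≤ g x := by
            have h1 := hterm x hx k
            rw [hkreal, EReal.coe_sub_le_coe_iff'] at h1
            exact h1
          have hy' : ⟪y, k⟫ - t ≤ g y := by
            have h1 := hterm y hy k
            rw [hkreal, EReal.coe_sub_le_coe_iff'] at h1
            exact h1
          rw [hkreal, EReal.coe_sub_le_coe_iff']
          have hin : ⟪a • x + b • y, k⟫ = a * ⟪x, k⟫ + b * ⟪y, k⟫ := by
            rw [inner_add_left, real_inner_smul_left, real_inner_smul_left]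
          rw [hin]
          have e1 := mul_le_mul_of_nonneg_left hx' ha
          have e2 := mul_le_mul_of_nonneg_left hy' hb
          have e3 : a * t + b * t = t := by rw [← add_mul, hab, one_mul]
          nlinarith
      rw [hgeq _ hmem, EReal.coe_le_coe_iff] at hφ
      exact hφ
    have hullopen : IsOpen (convexHull ℝ Ω) := isOpen_convexHull_of_isOpen hΩo
    refine ⟨⟨g, hconvg.continuousOn hullopen, fun x hx => hgeq x hx⟩, ?_⟩
    intro hall
    obtain ⟨x₀, hx₀⟩ := hΩne
    exact hne_bot x₀ (hall x₀ (subset_convexHull ℝ Ω hx₀))
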